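/- Let λ > 1/2, β ≥ 0, γ > 0, ε > 0, T > 0, and set k_λ := 2^{2·(λ−1)⁺ + 2λ − 1}, where (λ−1)⁺ := max(λ−1, 0). Let μ : [0, T] → ℝ be the unique solution of the initial value problem μ(0) = ε, μ′(s) = (γ²·(1+ε)·k_λ/2)·(1 + 1/(2λ·μ(s))) + 2βλ·μ(s) + ε for s ∈ [0, T]. Then there exist constants k ≥ e and δ > 0 (δ depending only on λ and ε), and a nondecreasing continuously differentiable function ν : [0, T] → [0, ∞) with ν(0) = 0, such that the function φ(s, x) := (x+k)·exp( μ(s)·(ln(x+k))^{2λ} + ν(s) ) is C^{1,2} on [0, T] × [0, ∞) and satisfies, for every (s, x) ∈ [0, T] × [0, ∞) and every z ∈ ℝ^d (d ≥ 1): −∂ₓφ(s, x)·( β·x·(ln x)·𝟙_{x>1} + γ·|z|·|ln|z||^λ ) + (1/2)·( ∂ₓₓφ(s, x) − δ )·|z|² + ∂ₛφ(s, x) ≥ 0, where the map z ↦ |z|·|ln|z||^λ is extended by the value 0 at z = 0. -/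

import Mathlib

open Real Set

private lemma young_sq {a v r : ℝ} (ha : 0 < a) : v * r ≤ a * r ^ 2 / 2 + v ^ 2 / (2 * a) := by
  rw [div_add_div _ _ (by norm_num) (by positivity), le_div_iff₀ (by positivity)]
  nlinarith [sq_nonneg (a * r - v)]

private lemma rpow_le_const_mul_exp {lam η : ℝ} (hlam : 0 < lam) (hη : 0 < η) {t : ℝ} (ht : 0 ≤ t) :
    t ^ lam ≤ (lam / η) ^ lam * Real.exp (η * t) := by
  have h2 : η * t / lam ≤ Real.exp (η * t / lam) := by
    have := Real.add_one_le_exp (η * t / lam); linarith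
  have h1 : t ≤ (lam / η) * Real.exp (η * t / lam) := by
    calc t = (lam / η) * (η * t / lam) := by field_simp
    _ ≤ _ := mul_le_mul_of_nonneg_left h2 (by positivity)
  calc t ^ lam ≤ ((lam / η) * Real.exp (η * t / lam)) ^ lam :=
        Real.rpow_le_rpow ht h1 hlam.le
  _ = (lam / η) ^ lam * (Real.exp (η * t / lam)) ^ lam :=
        Real.mul_rpow (by positivity) (Real.exp_pos _).le
  _ = (lam / η) ^ lam * Real.exp (η * t) := by
        rw [← Real.exp_mul]; congr 2; field_simp

set_option maxHeartbeats 2000000 in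
open Classical in
/-- Proposition 6.1 (case `λ > 1/2`): with `k_λ = 2^{2(λ-1)⁺ + 2λ - 1}` and `μ` the
solution of the IVP `μ(0) = ε`, `μ′ = (γ²(1+ε)k_λ/2)·(1 + 1/(2λμ)) + 2βλμ + ε` on
`[0,T]`, there exist constants `k ≥ e`, `δ > 0` and a nondecreasing `C¹` function
`ν ≥ 0` with `ν(0) = 0`, such that `φ(s,x) := (x+k)·exp(μ(s)·(ln(x+k))^{2λ} + ν(s))`
is `C^{1,2}` on `[0,T]×[0,∞)` and satisfies
`−∂ₓφ·(β·x·ln x·𝟙_{x>1} + γ·|z|·|ln|z||^λ) + (1/2)·(∂ₓₓφ − δ)·|z|² + ∂ₛφ ≥ 0`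
(the map `z ↦ |z|·|ln|z||^λ` being extended by `0` at `z = 0`). -/
theorem stmt_14 (lam β γ ε T : ℝ) (d : ℕ) (hd : 1 ≤ d)
    (hlam : 1 / 2 < lam) (hβ : 0 ≤ β) (hγ : 0 < γ) (hε : 0 < ε) (hT : 0 < T)
    (klam : ℝ) (hklam : klam = (2 : ℝ) ^ (2 * max (lam - 1) 0 + 2 * lam - 1))
    (μ : ℝ → ℝ) (hμ0 : μ 0 = ε) (hμpos : ∀ s ∈ Set.Icc 0 T, 0 < μ s)
    (hμderiv : ∀ s ∈ Set.Icc 0 T,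
      HasDerivWithinAt μ
        (γ ^ 2 * (1 + ε) * klam / 2 * (1 + 1 / (2 * lam * μ s)) + 2 * β * lam * μ s + ε)
        (Set.Icc 0 T) s) :
    ∃ k δ : ℝ, Real.exp 1 ≤ k ∧ 0 < δ ∧
    ∃ ν ν' : ℝ → ℝ, ν 0 = 0 ∧ (∀ s ∈ Set.Icc 0 T, 0 ≤ ν s) ∧
      MonotoneOn ν (Set.Icc 0 T) ∧ ContinuousOn ν' (Set.Icc 0 T) ∧
      (∀ s ∈ Set.Icc 0 T, HasDerivWithinAt ν (ν' s) (Set.Icc 0 T) s) ∧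
    ∃ φ φs φx φxx : ℝ → ℝ → ℝ,
      (∀ s x, φ s x =
        (x + k) * Real.exp (μ s * Real.log (x + k) ^ (2 * lam) + ν s)) ∧
      (∀ s ∈ Set.Icc 0 T, ∀ x ∈ Set.Ici (0 : ℝ),
        HasDerivWithinAt (fun t => φ t x) (φs s x) (Set.Icc 0 T) s ∧
        HasDerivWithinAt (fun u => φ s u) (φx s x) (Set.Ici 0) x ∧
        HasDerivWithinAt (fun u => φx s u) (φxx s x) (Set.Ici 0) x) ∧
      ContinuousOn (fun p : ℝ × ℝ => φ p.1 p.2) (Set.Icc 0 T ×ˢ Set.Ici 0) ∧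
      ContinuousOn (fun p : ℝ × ℝ => φs p.1 p.2) (Set.Icc 0 T ×ˢ Set.Ici 0) ∧
      ContinuousOn (fun p : ℝ × ℝ => φx p.1 p.2) (Set.Icc 0 T ×ˢ Set.Ici 0) ∧
      ContinuousOn (fun p : ℝ × ℝ => φxx p.1 p.2) (Set.Icc 0 T ×ˢ Set.Ici 0) ∧
      ∀ s ∈ Set.Icc 0 T, ∀ x ∈ Set.Ici (0 : ℝ), ∀ z : EuclideanSpace ℝ (Fin d),
        0 ≤ -φx s x * ((if 1 < x then β * x * Real.log x else 0)
              + γ * (if z = 0 then 0 else ‖z‖ * |Real.log ‖z‖| ^ lam))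
            + 1 / 2 * (φxx s x - δ) * ‖z‖ ^ 2 + φs s x := by
  have h0T : (0:ℝ) ∈ Icc 0 T := ⟨le_refl 0, hT.le⟩
  have hlam0 : 0 < lam := by linarith
  have h2l : 0 < 2 * lam := by linarith
  have h2l1 : 0 < 2 * lam - 1 := by linarith
  have hμc : ContinuousOn μ (Icc 0 T) := fun s hs => (hμderiv s hs).continuousWithinAt
  obtain ⟨s₀, hs₀, hmin⟩ := isCompact_Icc.exists_isMinOn ⟨0, h0T⟩ hμc
  obtain ⟨s₁, hs₁, hmax⟩ := isCompact_Icc.exists_isMaxOn ⟨0, h0T⟩ hμc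
  set m₀ := μ s₀ with hm₀def
  set M := μ s₁ with hMdef
  have hm₀ : 0 < m₀ := hμpos _ hs₀
  have hm₀le : ∀ s ∈ Icc 0 T, m₀ ≤ μ s := fun s hs => hmin hs
  have hMle : ∀ s ∈ Icc 0 T, μ s ≤ M := fun s hs => hmax hs
  have hMpos : 0 < M := lt_of_lt_of_le hm₀ (hm₀le _ hs₁)
  -- constants
  have hklam1 : 1 < klam := by
    rw [hklam]
    refine (Real.one_lt_rpow_iff_of_pos (by norm_num)).mpr (Or.inl ⟨by norm_num, ?_⟩)
    have : (0:ℝ) ≤ max (lam - 1) 0 := le_max_right _ _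
    linarith
  set κ := (1 + ε) * klam with hκdef
  have hκ : 1 < κ := by nlinarith
  have hκ1 : 1 < (κ + 1) / 2 := by linarith
  set Λ := ((κ + 1) / 2) ^ (1 / (2 * lam)) with hΛdef
  have hΛ : 1 < Λ :=
    (Real.one_lt_rpow_iff_of_pos (by linarith)).mpr (Or.inl ⟨hκ1, by positivity⟩)
  have hΛpow : Λ ^ (2 * lam) = (κ + 1) / 2 := by
    rw [hΛdef, ← Real.rpow_mul (by linarith), one_div, inv_mul_cancel₀ (ne_of_gt h2l),
      Real.rpow_one]
  set ρ := min (1/2 : ℝ) ((κ - 1) / (2 * κ)) with hρdef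
  have hρ0 : 0 < ρ := lt_min (by norm_num) (div_pos (by linarith) (by linarith))
  have hρhalf : ρ ≤ 1/2 := min_le_left _ _
  have hρκ : Λ ^ (2 * lam) ≤ (1 - ρ) * κ := by
    have h := min_le_right (1/2 : ℝ) ((κ - 1) / (2 * κ))
    rw [hΛpow]
    rw [le_div_iff₀ (by linarith : (0:ℝ) < 2 * κ)] at h
    nlinarith
  set η := (Λ - 1) / (2 * Λ) with hηdef
  have hη0 : 0 < η := div_pos (by linarith) (by linarith)
  have hη1 : (1 - η) * Λ = (Λ + 1) / 2 := by
    rw [hηdef]; field_simp [show Λ ≠ 0 by linarith]; ring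
  have hηhalf : η < 1 := by
    rw [hηdef, div_lt_one (by linarith)]; linarith
  set Ψ := max 1 ((1 / m₀) ^ (1 / (2 * lam - 1))) with hΨdef
  have hΨ1 : (1:ℝ) ≤ Ψ := le_max_left _ _
  have hΨprop : ∀ t : ℝ, 1 ≤ t → t ≤ m₀ * t ^ (2 * lam) + Ψ := by
    intro t ht
    rcases le_total t Ψ with h | h
    · have h2 : 0 ≤ m₀ * t ^ (2 * lam) := by positivity
      linarith
    · have hinv : (1 / m₀) ^ (1 / (2 * lam - 1)) ≤ t := le_trans (le_max_right _ _) h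
      have ht0 : (0:ℝ) < t := by linarith
      have h1 : 1 / m₀ ≤ t ^ (2 * lam - 1) := by
        calc 1 / m₀ = ((1 / m₀) ^ (1 / (2 * lam - 1))) ^ (2 * lam - 1) := by
              rw [← Real.rpow_mul (by positivity), one_div (2 * lam - 1),
                inv_mul_cancel₀ (ne_of_gt h2l1), Real.rpow_one]
        _ ≤ t ^ (2 * lam - 1) := Real.rpow_le_rpow (by positivity) hinv h2l1.le
      have hsplit : t ^ (2 * lam) = t ^ (2 * lam - 1) * t := by
        rw [← Real.rpow_add_one (ne_of_gt ht0)]; congr 1; ring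
      have h3 : t ≤ m₀ * t ^ (2 * lam) := by
        rw [hsplit]
        calc t = m₀ * (1 / m₀ * t) := by field_simp
        _ ≤ m₀ * (t ^ (2 * lam - 1) * t) :=
            mul_le_mul_of_nonneg_left (mul_le_mul_of_nonneg_right h1 ht0.le) hm₀.le
      linarith
  set δ := ρ * (2 * lam * m₀ * Real.exp (-Ψ)) with hδdef
  have hδ0 : 0 < δ := by positivity
  set B := max 1 (2 * β / ε) with hBdef
  set C3 := max 1 (2 * γ * lam ^ lam * (1 + 2 * lam * M) / ε) with hC3def
  set C4 := max 1 (2 * γ * (lam / η) ^ lam / (lam * m₀)) with hC4def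
  have hB1 : (1:ℝ) ≤ B := le_max_left _ _
  have hC31 : (1:ℝ) ≤ C3 := le_max_left _ _
  have hC41 : (1:ℝ) ≤ C4 := le_max_left _ _
  set L₀ := max (max 1 (B ^ (1 / (2 * lam - 1))))
      (max (Real.log C3) (2 * Real.log C4 / (Λ - 1))) with hL₀def
  have hL₀1 : (1:ℝ) ≤ L₀ := le_trans (le_max_left 1 _) (le_max_left _ _)
  set k := Real.exp L₀ with hkdef
  have hkpos : 0 < k := Real.exp_pos _
  have hk1 : Real.exp 1 ≤ k := Real.exp_le_exp.mpr hL₀1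
  have hlogk : Real.log k = L₀ := Real.log_exp _
  have hψ1 : ∀ x : ℝ, 0 ≤ x → 1 ≤ Real.log (x + k) := by
    intro x hx
    calc (1:ℝ) ≤ L₀ := hL₀1
    _ = Real.log k := hlogk.symm
    _ ≤ Real.log (x + k) := Real.log_le_log hkpos (by linarith)
  have hψL : ∀ x : ℝ, 0 ≤ x → L₀ ≤ Real.log (x + k) := by
    intro x hx
    calc L₀ = Real.log k := hlogk.symm
    _ ≤ Real.log (x + k) := Real.log_le_log hkpos (by linarith)
  have hμc2 : ContinuousOn (fun p : ℝ × ℝ => μ p.1) (Icc 0 T ×ˢ Ici 0) :=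
    hμc.comp continuous_fst.continuousOn (fun p hp => hp.1)
  have hyc : ContinuousOn (fun p : ℝ × ℝ => p.2 + k) (Icc 0 T ×ˢ Ici 0) :=
    (continuous_snd.add continuous_const).continuousOn
  have hyne : ∀ p : ℝ × ℝ, p ∈ Icc 0 T ×ˢ Ici 0 → p.2 + k ≠ 0 := by
    intro p hp
    have : (0:ℝ) ≤ p.2 := hp.2
    have : (0:ℝ) < p.2 + k := by linarith
    exact ne_of_gt this
  have hlc : ContinuousOn (fun p : ℝ × ℝ => Real.log (p.2 + k)) (Icc 0 T ×ˢ Ici 0) :=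
    hyc.log hyne
  have hlne : ∀ p : ℝ × ℝ, p ∈ Icc 0 T ×ˢ Ici 0 → Real.log (p.2 + k) ≠ 0 := by
    intro p hp
    have := hψ1 p.2 hp.2
    linarith
  have hrc : ∀ q : ℝ, ContinuousOn (fun p : ℝ × ℝ => Real.log (p.2 + k) ^ q)
      (Icc 0 T ×ˢ Ici 0) := fun q => hlc.rpow_const (fun p hp => Or.inl (hlne p hp))
  have hEc : ContinuousOn (fun p : ℝ × ℝ => Real.exp (μ p.1 * Real.log (p.2 + k) ^ (2 * lam)))
      (Icc 0 T ×ˢ Ici 0) := ContinuousOn.rexp (hμc2.mul (hrc (2 * lam)))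
  have hQc : ContinuousOn (fun p : ℝ × ℝ => 2 * lam * μ p.1 * Real.log (p.2 + k) ^ (2 * lam - 1))
      (Icc 0 T ×ˢ Ici 0) := (continuousOn_const.mul hμc2).mul (hrc (2 * lam - 1))
  have h2lμne : ∀ p : ℝ × ℝ, p ∈ Icc 0 T ×ˢ Ici 0 → 2 * lam * μ p.1 ≠ 0 := by
    intro p hp
    have := hμpos p.1 hp.1
    have : 0 < 2 * lam * μ p.1 := by positivity
    exact ne_of_gt this
  have hμexprc : ContinuousOn (fun p : ℝ × ℝ =>
      γ ^ 2 * (1 + ε) * klam / 2 * (1 + 1 / (2 * lam * μ p.1)) + 2 * β * lam * μ p.1 + ε)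
      (Icc 0 T ×ˢ Ici 0) := by
    refine ContinuousOn.add (ContinuousOn.add ?_ (continuousOn_const.mul hμc2)) continuousOn_const
    refine continuousOn_const.mul (continuousOn_const.add ?_)
    simp only [one_div]
    exact (continuousOn_const.mul hμc2).inv₀ h2lμne
  refine ⟨k, δ, hk1, hδ0, (fun _ => 0), (fun _ => 0), rfl, fun s _ => le_refl 0,
    monotoneOn_const, continuousOn_const, fun s hs => hasDerivWithinAt_const s _ 0,
    (fun s x => (x + k) * Real.exp (μ s * Real.log (x + k) ^ (2 * lam))),
    (fun s x => (x + k) * Real.exp (μ s * Real.log (x + k) ^ (2 * lam)) *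
      ((γ ^ 2 * (1 + ε) * klam / 2 * (1 + 1 / (2 * lam * μ s)) + 2 * β * lam * μ s + ε) *
        Real.log (x + k) ^ (2 * lam))),
    (fun s x => Real.exp (μ s * Real.log (x + k) ^ (2 * lam)) *
      (1 + 2 * lam * μ s * Real.log (x + k) ^ (2 * lam - 1))),
    (fun s x => Real.exp (μ s * Real.log (x + k) ^ (2 * lam)) / (x + k) *
      (2 * lam * μ s * Real.log (x + k) ^ (2 * lam - 1) *
          (1 + 2 * lam * μ s * Real.log (x + k) ^ (2 * lam - 1)) +
        2 * lam * (2 * lam - 1) * μ s * Real.log (x + k) ^ (2 * lam - 2))),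
    ?_, ?_, ?_, ?_, ?_, ?_, ?_⟩
  · intro s x; simp
  · intro s hs x hx
    have hx0 : (0:ℝ) ≤ x := hx
    have hy0 : (0:ℝ) < x + k := by linarith
    have hψx : 1 ≤ Real.log (x + k) := hψ1 x hx0
    have hψne : Real.log (x + k) ≠ 0 := by linarith
    have h1 : HasDerivAt (fun u : ℝ => u + k) 1 x := (hasDerivAt_id x).add_const k
    have h2 : HasDerivAt (fun u => Real.log (u + k)) (1 / (x + k)) x := by
      simpa using h1.log (ne_of_gt hy0)
    have h3 := h2.rpow_const (p := 2 * lam) (Or.inl hψne)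
    have h4 := (h3.const_mul (μ s)).exp
    refine ⟨?_, ?_, ?_⟩
    · have hds := ((hμderiv s hs).mul_const (Real.log (x + k) ^ (2 * lam))).exp.const_mul (x + k)
      refine hds.congr_deriv ?_
      ring
    · have h5 := h1.mul h4
      refine HasDerivAt.hasDerivWithinAt ?_
      refine h5.congr_deriv ?_
      field_simp
    · have h6 := h2.rpow_const (p := 2 * lam - 1) (Or.inl hψne)
      have h7 := (h6.const_mul (2 * lam * μ s)).const_add 1
      have h8 := h4.mul h7
      refine HasDerivAt.hasDerivWithinAt ?_
      refine h8.congr_deriv ?_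
      rw [show (2 * lam - 1 - 1) = 2 * lam - 2 by ring]
      field_simp
  · exact hyc.mul hEc
  · exact (hyc.mul hEc).mul (hμexprc.mul (hrc (2 * lam)))
  · exact hEc.mul (continuousOn_const.add hQc)
  · exact (hEc.div hyc hyne).mul
      ((hQc.mul (continuousOn_const.add hQc)).add ((continuousOn_const.mul hμc2).mul (hrc (2 * lam - 2))))
  · -- the main inequality
    intro s hs x hx z
    beta_reduce
    have hx0 : (0:ℝ) ≤ x := hx
    have hy0 : (0:ℝ) < x + k := by linarith
    have hky : k ≤ x + k := by linarith
    have hμs : 0 < μ s := hμpos s hs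
    have hmm₀ : m₀ ≤ μ s := hm₀le s hs
    have hmM : μ s ≤ M := hMle s hs
    set ps := Real.log (x + k) with hpsdef
    have hψx1 : 1 ≤ ps := hψ1 x hx0
    have hψL0 : L₀ ≤ ps := hψL x hx0
    have hψ0 : 0 < ps := by linarith
    set E := Real.exp (μ s * ps ^ (2 * lam)) with hEdef
    set Q := 2 * lam * μ s * ps ^ (2 * lam - 1) with hQdef
    set W := γ ^ 2 * (1 + ε) * klam / 2 * (1 + 1 / (2 * lam * μ s)) with hWdef
    set G := E / (x + k) * (Q * (1 + Q) + 2 * lam * (2 * lam - 1) * μ s * ps ^ (2 * lam - 2))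
      with hGdef
    have hE0 : 0 < E := Real.exp_pos _
    have hp2l1 : 1 ≤ ps ^ (2 * lam - 1) := by
      calc (1:ℝ) = 1 ^ (2 * lam - 1) := (Real.one_rpow _).symm
      _ ≤ ps ^ (2 * lam - 1) := Real.rpow_le_rpow (by norm_num) hψx1 h2l1.le
    have hQ0 : 0 < Q := by positivity
    have hp2lpos : 0 < ps ^ (2 * lam) := Real.rpow_pos_of_pos hψ0 _
    have hQm : 2 * lam * m₀ ≤ Q := by
      rw [hQdef]
      calc 2 * lam * m₀ = 2 * lam * m₀ * 1 := by ring
      _ ≤ 2 * lam * μ s * ps ^ (2 * lam - 1) :=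
          mul_le_mul (mul_le_mul_of_nonneg_left hmm₀ (by linarith)) hp2l1 zero_le_one (by positivity)
    have hQM : Q ≤ 2 * lam * M * ps ^ (2 * lam - 1) := by
      rw [hQdef]
      exact mul_le_mul_of_nonneg_right (mul_le_mul_of_nonneg_left hmM (by linarith))
        (le_trans zero_le_one hp2l1)
    have hQ2lm : 2 * lam * μ s ≤ Q := by
      rw [hQdef]
      calc 2 * lam * μ s = 2 * lam * μ s * 1 := by ring
      _ ≤ 2 * lam * μ s * ps ^ (2 * lam - 1) :=
          mul_le_mul_of_nonneg_left hp2l1 (by positivity)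
    have hsum : ps ^ (2 * lam) = ps ^ (2 * lam - 1) * ps := by
      rw [← Real.rpow_add_one (ne_of_gt hψ0)]; congr 1; ring
    have hEy : Real.exp (-Ψ) ≤ E / (x + k) := by
      have hyexp : x + k = Real.exp ps := (Real.exp_log hy0).symm
      have he : E / (x + k) = Real.exp (μ s * ps ^ (2 * lam) - ps) := by
        rw [Real.exp_sub, ← hyexp, ← hEdef]
      rw [he]
      apply Real.exp_le_exp.mpr
      have h1 := hΨprop ps hψx1
      have h2 : m₀ * ps ^ (2 * lam) ≤ μ s * ps ^ (2 * lam) :=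
        mul_le_mul_of_nonneg_right hmm₀ hp2lpos.le
      linarith
    have hEyQ : 0 < E / (x + k) * (Q * (1 + Q)) := by positivity
    have hG_lb : E / (x + k) * (Q * (1 + Q)) ≤ G := by
      rw [hGdef]
      have hd : 0 ≤ E / (x + k) * (2 * lam * (2 * lam - 1) * μ s * ps ^ (2 * lam - 2)) := by
        positivity
      have he : E / (x + k) * (Q * (1 + Q) + 2 * lam * (2 * lam - 1) * μ s * ps ^ (2 * lam - 2))
          = E / (x + k) * (Q * (1 + Q))
            + E / (x + k) * (2 * lam * (2 * lam - 1) * μ s * ps ^ (2 * lam - 2)) := by ring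
      linarith
    have hδρ : δ ≤ ρ * (E / (x + k) * (Q * (1 + Q))) := by
      have h1 : 2 * lam * m₀ * Real.exp (-Ψ) ≤ Q * (E / (x + k)) :=
        mul_le_mul hQm hEy (Real.exp_pos _).le hQ0.le
      have h1' : 0 < Q := hQ0
      have h2 : Q * (E / (x + k)) ≤ E / (x + k) * (Q * (1 + Q)) := by
        calc Q * (E / (x + k)) = Q * (E / (x + k)) * 1 := by ring
        _ ≤ Q * (E / (x + k)) * (1 + Q) :=
            mul_le_mul_of_nonneg_left (by linarith) (by positivity)
        _ = E / (x + k) * (Q * (1 + Q)) := by ring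
      rw [hδdef]
      exact mul_le_mul_of_nonneg_left (le_trans h1 h2) hρ0.le
    have ha : (1 - ρ) * (E / (x + k) * (Q * (1 + Q))) ≤ G - δ := by
      linarith [hG_lb, hδρ]
    have ha0 : 0 < G - δ := by
      have h1 : 0 < (1 - ρ) * (E / (x + k) * (Q * (1 + Q))) :=
        mul_pos (by linarith) hEyQ
      linarith
    have hklam0 : 0 < klam := by linarith
    have hW0 : 0 < W := by rw [hWdef]; positivity
    have hrestpos : 0 ≤ (x + k) * E * ((W + ε / 2) * ps ^ (2 * lam)) := by
      apply mul_nonneg (by positivity)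
      exact mul_nonneg (by linarith) hp2lpos.le
    have claimA : E * (1 + Q) * (if 1 < x then β * x * Real.log x else 0) ≤
        (x + k) * E * ((2 * β * lam * μ s + ε / 2) * ps ^ (2 * lam)) := by
      have hψk : 2 * β / ε ≤ ps ^ (2 * lam - 1) := by
        have h1 : B ^ (1 / (2 * lam - 1)) ≤ ps :=
          le_trans (le_trans (le_max_right 1 _) (le_max_left _ _)) hψL0
        have hBpos : (0:ℝ) < B := by linarith
        have h2 : B = (B ^ (1 / (2 * lam - 1))) ^ (2 * lam - 1) := by
          rw [← Real.rpow_mul hBpos.le, one_div, inv_mul_cancel₀ (ne_of_gt h2l1),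
            Real.rpow_one]
        calc 2 * β / ε ≤ B := le_max_right _ _
        _ = (B ^ (1 / (2 * lam - 1))) ^ (2 * lam - 1) := h2
        _ ≤ ps ^ (2 * lam - 1) :=
            Real.rpow_le_rpow (Real.rpow_nonneg hBpos.le _) h1 h2l1.le
      have h2βlam : 0 ≤ 2 * β * lam * μ s :=
        mul_nonneg (mul_nonneg (by linarith) hlam0.le) hμs.le
      split_ifs with hx1
      · have hlx0 : 0 ≤ Real.log x := Real.log_nonneg hx1.le
        have hlxψ : Real.log x ≤ ps := by
          rw [hpsdef]; exact Real.log_le_log (by linarith) (by linarith)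
        have hβx : β * x * Real.log x ≤ β * (x + k) * ps := by
          refine mul_le_mul ?_ hlxψ hlx0 (mul_nonneg hβ (by linarith))
          exact mul_le_mul_of_nonneg_left (by linarith) hβ
        have hεψ : β * ps ≤ ε / 2 * ps ^ (2 * lam) := by
          rw [hsum]
          have h3 : β ≤ ε / 2 * ps ^ (2 * lam - 1) := by
            have h4 := (div_le_iff₀ hε).mp hψk
            linarith [h4]
          calc β * ps ≤ (ε / 2 * ps ^ (2 * lam - 1)) * ps :=
                mul_le_mul_of_nonneg_right h3 hψ0.le
          _ = ε / 2 * (ps ^ (2 * lam - 1) * ps) := by ring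
        have hQψ : Q * ps = 2 * lam * μ s * ps ^ (2 * lam) := by rw [hQdef, hsum]; ring
        have h7 : (x + k) * E * (β * ps) ≤ (x + k) * E * (ε / 2 * ps ^ (2 * lam)) :=
          mul_le_mul_of_nonneg_left hεψ (mul_nonneg hy0.le hE0.le)
        calc E * (1 + Q) * (β * x * Real.log x)
            ≤ E * (1 + Q) * (β * (x + k) * ps) :=
              mul_le_mul_of_nonneg_left hβx (mul_nonneg hE0.le (by linarith))
        _ = (x + k) * E * (β * ps) + (x + k) * E * (β * (Q * ps)) := by ring
        _ = (x + k) * E * (β * ps)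
              + (x + k) * E * (2 * β * lam * μ s * ps ^ (2 * lam)) := by rw [hQψ]; ring
        _ ≤ (x + k) * E * (ε / 2 * ps ^ (2 * lam))
              + (x + k) * E * (2 * β * lam * μ s * ps ^ (2 * lam)) := by linarith
        _ = (x + k) * E * ((2 * β * lam * μ s + ε / 2) * ps ^ (2 * lam)) := by ring
      · have h9 : 0 ≤ (x + k) * E * ((2 * β * lam * μ s + ε / 2) * ps ^ (2 * lam)) :=
          mul_nonneg (mul_nonneg hy0.le hE0.le) (mul_nonneg (by linarith) hp2lpos.le)
        simpa using h9
    have claimB : γ * (E * (1 + Q)) * (if z = 0 then 0 else ‖z‖ * |Real.log ‖z‖| ^ lam) ≤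
        (G - δ) * ‖z‖ ^ 2 / 2 + (x + k) * E * ((W + ε / 2) * ps ^ (2 * lam)) := by
      have hEQ0 : 0 ≤ E * (1 + Q) := mul_nonneg hE0.le (by linarith)
      have hhalfQ : 0 ≤ (G - δ) * ‖z‖ ^ 2 / 2 :=
        div_nonneg (mul_nonneg ha0.le (sq_nonneg _)) (by norm_num)
      have hWterm : 0 ≤ (x + k) * E * (W * ps ^ (2 * lam)) :=
        mul_nonneg (mul_nonneg hy0.le hE0.le) (mul_nonneg hW0.le hp2lpos.le)
      have hεterm : 0 ≤ (x + k) * E * (ε / 2 * ps ^ (2 * lam)) :=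
        mul_nonneg (mul_nonneg hy0.le hE0.le) (mul_nonneg (by linarith) hp2lpos.le)
      have hsplit3 : (x + k) * E * ((W + ε / 2) * ps ^ (2 * lam))
          = (x + k) * E * (W * ps ^ (2 * lam)) + (x + k) * E * (ε / 2 * ps ^ (2 * lam)) := by
        ring
      by_cases hz : z = 0
      · rw [if_pos hz, mul_zero]
        linarith
      · rw [if_neg hz]
        have hr0 : 0 < ‖z‖ := norm_pos_iff.mpr hz
        rcases le_or_gt ‖z‖ 1 with hr1 | hr1
        · -- small case : ‖z‖ ≤ 1
          have hlr : Real.log ‖z‖ ≤ 0 := Real.log_nonpos hr0.le hr1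
          have habs : |Real.log ‖z‖| = -Real.log ‖z‖ := abs_of_nonpos hlr
          rw [habs]
          have hu0 : 0 ≤ -Real.log ‖z‖ := by linarith
          have hrexp : ‖z‖ = Real.exp (-(-Real.log ‖z‖)) := by
            rw [neg_neg, Real.exp_log hr0]
          have hkey : ‖z‖ * (-Real.log ‖z‖) ^ lam ≤ lam ^ lam := by
            have h1 := rpow_le_const_mul_exp hlam0 one_pos hu0
            rw [div_one, one_mul] at h1
            calc ‖z‖ * (-Real.log ‖z‖) ^ lam
                = Real.exp (-(-Real.log ‖z‖)) * (-Real.log ‖z‖) ^ lam := by rw [← hrexp]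
            _ ≤ Real.exp (-(-Real.log ‖z‖)) * (lam ^ lam * Real.exp (-Real.log ‖z‖)) :=
                mul_le_mul_of_nonneg_left h1 (Real.exp_pos _).le
            _ = lam ^ lam * (Real.exp (-(-Real.log ‖z‖)) * Real.exp (-Real.log ‖z‖)) := by
                ring
            _ = lam ^ lam := by rw [← Real.exp_add]; simp
          have h1Q : 1 + Q ≤ (1 + 2 * lam * M) * ps ^ (2 * lam) := by
            have e1 : ps ^ (2 * lam - 1) ≤ ps ^ (2 * lam) :=
              Real.rpow_le_rpow_of_exponent_le hψx1 (by linarith)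
            have e2 : Q ≤ 2 * lam * M * ps ^ (2 * lam) := by
              refine le_trans hQM (mul_le_mul_of_nonneg_left e1 ?_)
              exact mul_nonneg (by linarith) hMpos.le
            have e3 : (1:ℝ) ≤ ps ^ (2 * lam) := le_trans hp2l1 e1
            have e4 : (1 + 2 * lam * M) * ps ^ (2 * lam)
                = ps ^ (2 * lam) + 2 * lam * M * ps ^ (2 * lam) := by ring
            linarith
          have hkC3 : 2 * γ * lam ^ lam * (1 + 2 * lam * M) / ε ≤ k := by
            calc 2 * γ * lam ^ lam * (1 + 2 * lam * M) / ε ≤ C3 := le_max_right _ _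
            _ = Real.exp (Real.log C3) := (Real.exp_log (by linarith)).symm
            _ ≤ Real.exp L₀ :=
                Real.exp_le_exp.mpr (le_trans (le_max_left _ _) (le_max_right _ _))
          have c1 : γ * (E * (1 + Q)) * (‖z‖ * (-Real.log ‖z‖) ^ lam)
              ≤ γ * (E * (1 + Q)) * lam ^ lam :=
            mul_le_mul_of_nonneg_left hkey (mul_nonneg hγ.le hEQ0)
          have c2 : γ * (E * (1 + Q)) * lam ^ lam
              ≤ γ * (E * ((1 + 2 * lam * M) * ps ^ (2 * lam))) * lam ^ lam := by
            refine mul_le_mul_of_nonneg_right ?_ (Real.rpow_nonneg hlam0.le _)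
            exact mul_le_mul_of_nonneg_left (mul_le_mul_of_nonneg_left h1Q hE0.le) hγ.le
          have c3 : γ * (E * ((1 + 2 * lam * M) * ps ^ (2 * lam))) * lam ^ lam
              ≤ (x + k) * E * (ε / 2 * ps ^ (2 * lam)) := by
            have h9 : γ * lam ^ lam * (1 + 2 * lam * M) ≤ ε / 2 * (x + k) := by
              rw [div_le_iff₀ hε] at hkC3
              have h10 : 0 ≤ ε * x := mul_nonneg hε.le hx0
              linarith
            have h11 : 0 ≤ E * ps ^ (2 * lam) := mul_nonneg hE0.le hp2lpos.le
            calc γ * (E * ((1 + 2 * lam * M) * ps ^ (2 * lam))) * lam ^ lam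
                = (γ * lam ^ lam * (1 + 2 * lam * M)) * (E * ps ^ (2 * lam)) := by ring
            _ ≤ (ε / 2 * (x + k)) * (E * ps ^ (2 * lam)) :=
                mul_le_mul_of_nonneg_right h9 h11
            _ = (x + k) * E * (ε / 2 * ps ^ (2 * lam)) := by ring
          linarith
        · -- ‖z‖ > 1
          have ht0 : 0 ≤ Real.log ‖z‖ := Real.log_nonneg hr1.le
          have habs : |Real.log ‖z‖| = Real.log ‖z‖ := abs_of_nonneg ht0
          rw [habs]
          have hΛψ0 : 0 < Λ * ps := mul_pos (by linarith) hψ0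
          rcases le_or_gt ‖z‖ (Real.exp (Λ * ps)) with hr2 | hr2
          · -- middle case
            have htΛ : Real.log ‖z‖ ≤ Λ * ps := by
              calc Real.log ‖z‖ ≤ Real.log (Real.exp (Λ * ps)) := Real.log_le_log hr0 hr2
              _ = Λ * ps := Real.log_exp _
            have hpow : Real.log ‖z‖ ^ lam ≤ (Λ * ps) ^ lam :=
              Real.rpow_le_rpow ht0 htΛ hlam0.le
            set v := γ * (E * (1 + Q)) * (Λ * ps) ^ lam with hvdef
            have hv0 : 0 ≤ v :=
              mul_nonneg (mul_nonneg hγ.le hEQ0) (Real.rpow_nonneg hΛψ0.le _)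
            have step1 : γ * (E * (1 + Q)) * (‖z‖ * Real.log ‖z‖ ^ lam) ≤ v * ‖z‖ := by
              rw [hvdef]
              calc γ * (E * (1 + Q)) * (‖z‖ * Real.log ‖z‖ ^ lam)
                  = γ * (E * (1 + Q)) * Real.log ‖z‖ ^ lam * ‖z‖ := by ring
              _ ≤ γ * (E * (1 + Q)) * (Λ * ps) ^ lam * ‖z‖ := by
                  refine mul_le_mul_of_nonneg_right ?_ hr0.le
                  exact mul_le_mul_of_nonneg_left hpow (mul_nonneg hγ.le hEQ0)
            have step2 := @young_sq (G - δ) v ‖z‖ ha0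
            have step3 : v ^ 2 / (2 * (G - δ)) ≤ (x + k) * E * (W * ps ^ (2 * lam)) := by
              rw [div_le_iff₀ (by linarith : (0:ℝ) < 2 * (G - δ))]
              have hv2 : v ^ 2
                  = γ ^ 2 * E ^ 2 * (1 + Q) ^ 2 * (Λ ^ (2 * lam) * ps ^ (2 * lam)) := by
                have h1 : ((Λ * ps) ^ lam) ^ 2 = Λ ^ (2 * lam) * ps ^ (2 * lam) := by
                  rw [sq, ← Real.rpow_add hΛψ0, show lam + lam = 2 * lam by ring,
                    Real.mul_rpow (by linarith : (0:ℝ) ≤ Λ) hψ0.le]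
                calc v ^ 2 = (γ * (E * (1 + Q))) ^ 2 * ((Λ * ps) ^ lam) ^ 2 := by
                      rw [hvdef]; ring
                _ = _ := by rw [h1]; ring
              have hQW : γ ^ 2 * κ * (1 + Q) ≤ 2 * (Q * W) := by
                have h2 : 1 / Q ≤ 1 / (2 * lam * μ s) :=
                  one_div_le_one_div_of_le (mul_pos (by linarith) hμs) hQ2lm
                have h3 : γ ^ 2 * κ / 2 * (1 + 1 / Q) ≤ W := by
                  have hcoef : 0 ≤ γ ^ 2 * ((1 + ε) * klam) / 2 := by positivity
                  calc γ ^ 2 * κ / 2 * (1 + 1 / Q)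
                      = γ ^ 2 * ((1 + ε) * klam) / 2 * (1 + 1 / Q) := by rw [hκdef]
                  _ ≤ γ ^ 2 * ((1 + ε) * klam) / 2 * (1 + 1 / (2 * lam * μ s)) :=
                      mul_le_mul_of_nonneg_left (by linarith) hcoef
                  _ = W := by rw [hWdef]; ring
                have h6 := mul_le_mul_of_nonneg_left h3
                  (by linarith [hQ0] : (0:ℝ) ≤ 2 * Q)
                have h7 : 2 * Q * (γ ^ 2 * κ / 2 * (1 + 1 / Q)) = γ ^ 2 * κ * (1 + Q) := by
                  field_simp
                  ring
                linarith
              have hbase : 0 ≤ γ ^ 2 * E ^ 2 * (1 + Q) ^ 2 * ps ^ (2 * lam) :=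
                mul_nonneg (mul_nonneg (mul_nonneg (sq_nonneg γ) (sq_nonneg E))
                  (sq_nonneg (1 + Q))) hp2lpos.le
              have key1 : v ^ 2
                  ≤ (1 - ρ) * κ * (γ ^ 2 * E ^ 2 * (1 + Q) ^ 2 * ps ^ (2 * lam)) := by
                rw [hv2]
                have h8 := mul_le_mul_of_nonneg_right hρκ hbase
                calc γ ^ 2 * E ^ 2 * (1 + Q) ^ 2 * (Λ ^ (2 * lam) * ps ^ (2 * lam))
                    = Λ ^ (2 * lam) * (γ ^ 2 * E ^ 2 * (1 + Q) ^ 2 * ps ^ (2 * lam)) := by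
                      ring
                _ ≤ (1 - ρ) * κ * (γ ^ 2 * E ^ 2 * (1 + Q) ^ 2 * ps ^ (2 * lam)) := h8
              have h2a : 2 * (1 - ρ) * (E / (x + k) * (Q * (1 + Q))) ≤ 2 * (G - δ) := by
                linarith [ha]
              have key2 : (1 - ρ) * κ * (γ ^ 2 * E ^ 2 * (1 + Q) ^ 2 * ps ^ (2 * lam))
                  ≤ (x + k) * E * (W * ps ^ (2 * lam)) * (2 * (G - δ)) := by
                have c1 : (x + k) * E * (W * ps ^ (2 * lam))
                      * (2 * (1 - ρ) * (E / (x + k) * (Q * (1 + Q))))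
                    ≤ (x + k) * E * (W * ps ^ (2 * lam)) * (2 * (G - δ)) :=
                  mul_le_mul_of_nonneg_left h2a hWterm
                have erhs : (x + k) * E * (W * ps ^ (2 * lam))
                      * (2 * (1 - ρ) * (E / (x + k) * (Q * (1 + Q))))
                    = (1 - ρ) * (2 * (Q * W)) * (E ^ 2 * (1 + Q) * ps ^ (2 * lam)) := by
                  field_simp
                have hb2 : 0 ≤ E ^ 2 * (1 + Q) * ps ^ (2 * lam) :=
                  mul_nonneg (mul_nonneg (sq_nonneg E) (by linarith)) hp2lpos.le
                have c2 : (1 - ρ) * κ * (γ ^ 2 * E ^ 2 * (1 + Q) ^ 2 * ps ^ (2 * lam))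
                    ≤ (1 - ρ) * (2 * (Q * W)) * (E ^ 2 * (1 + Q) * ps ^ (2 * lam)) := by
                  have h12 := mul_le_mul_of_nonneg_right hQW hb2
                  have h13 := mul_le_mul_of_nonneg_left h12
                    (by linarith : (0:ℝ) ≤ 1 - ρ)
                  calc (1 - ρ) * κ * (γ ^ 2 * E ^ 2 * (1 + Q) ^ 2 * ps ^ (2 * lam))
                      = (1 - ρ) * ((γ ^ 2 * κ * (1 + Q)) * (E ^ 2 * (1 + Q) * ps ^ (2 * lam))) := by
                        ring
                  _ ≤ (1 - ρ) * ((2 * (Q * W)) * (E ^ 2 * (1 + Q) * ps ^ (2 * lam))) := h13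
                  _ = (1 - ρ) * (2 * (Q * W)) * (E ^ 2 * (1 + Q) * ps ^ (2 * lam)) := by ring
                calc (1 - ρ) * κ * (γ ^ 2 * E ^ 2 * (1 + Q) ^ 2 * ps ^ (2 * lam)) ≤ _ := c2
                _ = (x + k) * E * (W * ps ^ (2 * lam))
                      * (2 * (1 - ρ) * (E / (x + k) * (Q * (1 + Q)))) := erhs.symm
                _ ≤ _ := c1
              linarith [key1, key2]
            linarith [step1, step2, step3]
          · -- large case
            have htΛ : Λ * ps ≤ Real.log ‖z‖ := by
              calc Λ * ps = Real.log (Real.exp (Λ * ps)) := (Real.log_exp _).symm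
              _ ≤ Real.log ‖z‖ := Real.log_le_log (Real.exp_pos _) hr2.le
            have htpos : 0 < Real.log ‖z‖ := lt_of_lt_of_le hΛψ0 htΛ
            have hη1' : (0:ℝ) ≤ 1 - η := by linarith
            have htlam := rpow_le_const_mul_exp hlam0 hη0 htpos.le
            have hkC4 : 2 * γ * (lam / η) ^ lam / (lam * m₀) ≤ k ^ ((Λ - 1) / 2) := by
              have hL4 : 2 * Real.log C4 / (Λ - 1) ≤ L₀ :=
                le_trans (le_max_right _ _) (le_max_right _ _)
              have h5 : Real.log C4 ≤ L₀ * ((Λ - 1) / 2) := by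
                rw [div_le_iff₀ (by linarith : (0:ℝ) < Λ - 1)] at hL4
                linarith
              calc 2 * γ * (lam / η) ^ lam / (lam * m₀) ≤ C4 := le_max_right _ _
              _ = Real.exp (Real.log C4) := (Real.exp_log (by linarith)).symm
              _ ≤ Real.exp (L₀ * ((Λ - 1) / 2)) := Real.exp_le_exp.mpr h5
              _ = k ^ ((Λ - 1) / 2) := by rw [hkdef, ← Real.exp_mul]
            have hyΛ : 2 * γ * (lam / η) ^ lam / (lam * m₀) ≤ (x + k) ^ ((Λ - 1) / 2) :=
              le_trans hkC4 (Real.rpow_le_rpow hkpos.le hky (by linarith))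
            have hexp1 : (x + k) * (x + k) ^ ((Λ - 1) / 2)
                ≤ Real.exp ((1 - η) * Real.log ‖z‖) := by
              have e1 : (1 - η) * (Λ * ps) ≤ (1 - η) * Real.log ‖z‖ :=
                mul_le_mul_of_nonneg_left htΛ hη1'
              have e2 : (1 - η) * (Λ * ps) = (Λ + 1) / 2 * ps := by
                rw [show (1 - η) * (Λ * ps) = ((1 - η) * Λ) * ps by ring, hη1]
              have e3 : Real.exp ((Λ + 1) / 2 * ps) = (x + k) ^ ((Λ + 1) / 2) := by
                rw [Real.rpow_def_of_pos hy0, ← hpsdef, mul_comm]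
              have e4 : (x + k) ^ ((Λ + 1) / 2) = (x + k) * (x + k) ^ ((Λ - 1) / 2) := by
                rw [show (Λ + 1) / 2 = 1 + (Λ - 1) / 2 by ring, Real.rpow_add hy0,
                  Real.rpow_one]
              calc (x + k) * (x + k) ^ ((Λ - 1) / 2) = (x + k) ^ ((Λ + 1) / 2) := e4.symm
              _ = Real.exp ((Λ + 1) / 2 * ps) := e3.symm
              _ ≤ Real.exp ((1 - η) * Real.log ‖z‖) := by
                  rw [← e2]
                  exact Real.exp_le_exp.mpr e1
            have l3 : ‖z‖ = Real.exp (η * Real.log ‖z‖) * Real.exp ((1 - η) * Real.log ‖z‖) := by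
              rw [← Real.exp_add, show η * Real.log ‖z‖ + (1 - η) * Real.log ‖z‖
                = Real.log ‖z‖ by ring, Real.exp_log hr0]
            have h4 : 4 * γ * (x + k) * Real.log ‖z‖ ^ lam ≤ Q * ‖z‖ := by
              have hA0 : 0 ≤ Real.exp (η * Real.log ‖z‖) := (Real.exp_pos _).le
              have c0 : 4 * γ * (x + k) * Real.log ‖z‖ ^ lam
                  ≤ 4 * γ * (x + k) * ((lam / η) ^ lam * Real.exp (η * Real.log ‖z‖)) := by
                refine mul_le_mul_of_nonneg_left htlam ?_
                exact mul_nonneg (mul_nonneg (by norm_num) hγ.le) hy0.le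
              have c1 : 4 * γ * (x + k) * ((lam / η) ^ lam * Real.exp (η * Real.log ‖z‖))
                  = 2 * lam * m₀ * ((x + k) * (2 * γ * (lam / η) ^ lam / (lam * m₀)))
                      * Real.exp (η * Real.log ‖z‖) := by
                have hlm0 : (0:ℝ) < lam * m₀ := mul_pos hlam0 hm₀
                have h20 : lam * m₀ / (lam * m₀) = 1 := div_self hlm0.ne'
                have h21 : 2 * lam * m₀ * ((x + k) * (2 * γ * (lam / η) ^ lam / (lam * m₀)))
                      * Real.exp (η * Real.log ‖z‖)
                    = lam * m₀ / (lam * m₀) * (4 * γ * (x + k) *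
                        ((lam / η) ^ lam * Real.exp (η * Real.log ‖z‖))) := by ring
                rw [h21, h20, one_mul]
              have c2 : 2 * lam * m₀ * ((x + k) * (2 * γ * (lam / η) ^ lam / (lam * m₀)))
                      * Real.exp (η * Real.log ‖z‖)
                  ≤ 2 * lam * m₀ * ((x + k) * (x + k) ^ ((Λ - 1) / 2))
                      * Real.exp (η * Real.log ‖z‖) := by
                refine mul_le_mul_of_nonneg_right ?_ hA0
                refine mul_le_mul_of_nonneg_left ?_ (by positivity)
                exact mul_le_mul_of_nonneg_left hyΛ hy0.le
              have c3 : 2 * lam * m₀ * ((x + k) * (x + k) ^ ((Λ - 1) / 2))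
                      * Real.exp (η * Real.log ‖z‖)
                  ≤ 2 * lam * m₀ * Real.exp ((1 - η) * Real.log ‖z‖)
                      * Real.exp (η * Real.log ‖z‖) := by
                refine mul_le_mul_of_nonneg_right ?_ hA0
                exact mul_le_mul_of_nonneg_left hexp1 (by positivity)
              have c4 : 2 * lam * m₀ * Real.exp ((1 - η) * Real.log ‖z‖)
                    * Real.exp (η * Real.log ‖z‖) = 2 * lam * m₀ * ‖z‖ := by
                have h22 : Real.exp ((1 - η) * Real.log ‖z‖) * Real.exp (η * Real.log ‖z‖)
                    = ‖z‖ := by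
                  rw [← Real.exp_add, show (1 - η) * Real.log ‖z‖ + η * Real.log ‖z‖
                    = Real.log ‖z‖ by ring, Real.exp_log hr0]
                calc 2 * lam * m₀ * Real.exp ((1 - η) * Real.log ‖z‖)
                      * Real.exp (η * Real.log ‖z‖)
                    = 2 * lam * m₀ * (Real.exp ((1 - η) * Real.log ‖z‖)
                      * Real.exp (η * Real.log ‖z‖)) := by ring
                _ = 2 * lam * m₀ * ‖z‖ := by rw [h22]
              have c5 : 2 * lam * m₀ * ‖z‖ ≤ Q * ‖z‖ :=
                mul_le_mul_of_nonneg_right hQm hr0.le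
              linarith [c0, c1.le, c2, c3, c4.le, c5]
            have hGlb2 : E / (x + k) * (Q * (1 + Q)) * (1 / 2) ≤ G - δ := by
              have h14 : E / (x + k) * (Q * (1 + Q)) * (1 / 2)
                  ≤ E / (x + k) * (Q * (1 + Q)) * (1 - ρ) :=
                mul_le_mul_of_nonneg_left (by linarith) hEyQ.le
              linarith [ha]
            have dnn : 0 ≤ E * (1 + Q) / (4 * (x + k)) := by
              apply div_nonneg hEQ0
              linarith
            have d1 := mul_le_mul_of_nonneg_left h4 dnn
            have e5 : E * (1 + Q) / (4 * (x + k)) * (4 * γ * (x + k) * Real.log ‖z‖ ^ lam)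
                = γ * (E * (1 + Q)) * Real.log ‖z‖ ^ lam := by
              field_simp
            have e6 : E * (1 + Q) / (4 * (x + k)) * (Q * ‖z‖)
                = E / (x + k) * (Q * (1 + Q)) * (1 / 2) * (‖z‖ / 2) := by
              field_simp
              ring
            have d2 : E / (x + k) * (Q * (1 + Q)) * (1 / 2) * (‖z‖ / 2)
                ≤ (G - δ) * (‖z‖ / 2) :=
              mul_le_mul_of_nonneg_right hGlb2 (by positivity)
            have d3 : γ * (E * (1 + Q)) * Real.log ‖z‖ ^ lam ≤ (G - δ) * (‖z‖ / 2) := by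
              linarith [d1, e5.le, e6.le, d2]
            have f1 := mul_le_mul_of_nonneg_right d3 hr0.le
            have hrest2 : 0 ≤ (x + k) * E * ((W + ε / 2) * ps ^ (2 * lam)) := hrestpos
            -- f1 : γ(E(1+Q))t^λ * r ≤ (G-δ)*(r/2)*r
            linarith [f1, hrest2]
    have hsplit2 : (x + k) * E * ((W + 2 * β * lam * μ s + ε) * ps ^ (2 * lam)) =
        (x + k) * E * ((2 * β * lam * μ s + ε / 2) * ps ^ (2 * lam)) +
        (x + k) * E * ((W + ε / 2) * ps ^ (2 * lam)) := by ring
    have hexp : -(E * (1 + Q)) * ((if 1 < x then β * x * Real.log x else 0)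
          + γ * (if z = 0 then 0 else ‖z‖ * |Real.log ‖z‖| ^ lam)) =
        -(E * (1 + Q) * (if 1 < x then β * x * Real.log x else 0))
          - γ * (E * (1 + Q)) * (if z = 0 then 0 else ‖z‖ * |Real.log ‖z‖| ^ lam) := by ring
    linarith [claimA, claimB]
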